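/- Let L be a completely integrally closed principally generated C-lattice lattice domain. Then L is divisorial if and only if L is a Dedekind lattice, i.e., every element of L is principal. -/

import Mathlib

/-- A multiplicative lattice: a complete lattice (bottom `⊥` playing the role of `0`)
which is a commutative monoid whose identity `1` is the top element, and in which
multiplication distributes over arbitrary joins. -/
class MulLattice (L : Type*) extends CompleteLattice L, CommMonoid L where
  one_eq_top : (1 : L) = ⊤
  mul_sSup : ∀ (a : L) (S : Set L), a * sSup S = ⨆ b ∈ S, a * b

namespace MulLattice

variable {L : Type*} [MulLattice L]

/-- The residual `(y : x) = ⋁ {a | a * x ≤ y}`. -/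
def res (y x : L) : L := sSup {a : L | a * x ≤ y}

/-- `x` is meet-principal: `y ⊓ z * x = ((y : x) ⊓ z) * x` for all `y, z`. -/
def IsMeetPrincipal (x : L) : Prop := ∀ y z : L, y ⊓ z * x = (res y x ⊓ z) * x

/-- `x` is join-principal: `y ⊔ (z : x) = ((y * x ⊔ z) : x)` for all `y, z`. -/
def IsJoinPrincipal (x : L) : Prop := ∀ y z : L, y ⊔ res z x = res (y * x ⊔ z) x

/-- `x` is principal if it is both meet-principal and join-principal. -/
def IsPrincipal (x : L) : Prop := IsMeetPrincipal x ∧ IsJoinPrincipal x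

/-- A prime element: a proper element `p` with `x * y ≤ p → x ≤ p ∨ y ≤ p`. -/
def IsPrime (p : L) : Prop := p ≠ 1 ∧ ∀ x y : L, x * y ≤ p → x ≤ p ∨ y ≤ p

/-- A maximal element: an element maximal in `L - {1}`. -/
def IsMaximal (m : L) : Prop := m ≠ 1 ∧ ∀ b : L, m < b → b = 1

end MulLattice

/-- A principally generated C-lattice: a multiplicative lattice in which `1` is compact,
compact elements are closed under multiplication, every element is a join of compact
elements and every element is a join of principal elements. -/
class PGCLattice (L : Type*) extends MulLattice L where
  top_isCompact : IsCompactElement (⊤ : L)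
  compact_mul : ∀ a b : L, IsCompactElement a →
    IsCompactElement b → IsCompactElement (a * b)
  compactly_generated : ∀ a : L,
    a = sSup {c : L | IsCompactElement c ∧ c ≤ a}
  principally_generated : ∀ a : L,
    a = sSup {x : L | MulLattice.IsPrincipal x ∧ x ≤ a}

namespace MulLattice

variable {L : Type*}

/-- A lattice domain: `0 = ⊥` is a prime element. -/
def IsLatticeDomain (L : Type*) [MulLattice L] : Prop := IsPrime (⊥ : L)

variable [PGCLattice L]

open Classical in
/-- The divisorial (`v`-)closure of `a`: equals `(x : (x : a))` for a nonzero principal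
`x ≤ a` when such an `x` exists (in a lattice domain this is independent of the choice
of `x`), and `⊥` otherwise (in particular `vclos ⊥ = ⊥`). -/
noncomputable def vclos (a : L) : L :=
  if h : ∃ x : L, IsPrincipal x ∧ x ≠ ⊥ ∧ x ≤ a then
    res h.choose (res h.choose a)
  else ⊥

/-- `a` is divisorial if `a = a_v`. -/
def IsDivisorial (a : L) : Prop := vclos a = a

/-- `L` is h-local: every nonzero prime is below a unique maximal element and
every nonzero element is below only finitely many maximal elements. -/
def IsHLocal (L : Type*) [PGCLattice L] : Prop :=
  (∀ r : L, r ≠ ⊥ → IsPrime r → ∃! m : L, IsMaximal m ∧ r ≤ m) ∧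
  (∀ b : L, b ≠ ⊥ → {m : L | IsMaximal m ∧ b ≤ m}.Finite)

end MulLattice

open MulLattice

namespace MulLattice

section Helpers

variable {L : Type*} [MulLattice L]

lemma mulSup (a b c : L) : a * (b ⊔ c) = a * b ⊔ a * c := by
  rw [← sSup_pair, mul_sSup, iSup_pair]

lemma mulBot (a : L) : a * ⊥ = ⊥ := by
  rw [← sSup_empty, mul_sSup]; simp

lemma mulISup {ι : Sort*} (a : L) (f : ι → L) : a * (⨆ i, f i) = ⨆ i, a * f i := by
  rw [iSup, mul_sSup, iSup_range]

lemma mmono {a b : L} (c : L) (h : a ≤ b) : c * a ≤ c * b := by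
  have : c * b = c * a ⊔ c * b := by rw [← mulSup, sup_eq_right.2 h]
  rw [this]; exact le_sup_left

lemma mmono' {a b : L} (c : L) (h : a ≤ b) : a * c ≤ b * c := by
  rw [mul_comm a c, mul_comm b c]; exact mmono c h

lemma mulTop (a : L) : a * ⊤ = a := by rw [← one_eq_top, mul_one]

lemma le_res {u y x : L} (h : u * x ≤ y) : u ≤ res y x := le_sSup h

lemma res_mul_le (y x : L) : res y x * x ≤ y := by
  rw [res, mul_comm, mul_sSup]
  exact iSup₂_le fun b hb => by rw [mul_comm]; exact hb

lemma mul_le_of_le_res {u y x : L} (h : u ≤ res y x) : u * x ≤ y :=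
  le_trans (mmono' x h) (res_mul_le y x)

lemma res_bot_right (y : L) : res y ⊥ = ⊤ :=
  top_unique (le_sSup (by simp [Set.mem_setOf_eq, mulBot, mul_comm]))

lemma res_top (y : L) : res y ⊤ = y := by
  apply le_antisymm
  · exact sSup_le fun c hc => by simpa [mulTop] using hc
  · exact le_sSup (by simp [Set.mem_setOf_eq, mulTop])

lemma res_bot_left (hL : IsLatticeDomain L) {x : L} (hx : x ≠ ⊥) : res ⊥ x = ⊥ := by
  rw [eq_bot_iff]; apply sSup_le; intro c hc
  rcases hL.2 c x hc with h | h
  · exact h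
  · exact absurd (le_bot_iff.1 h) hx

lemma cancel (hL : IsLatticeDomain L) {x : L} (hx : IsPrincipal x) (hx0 : x ≠ ⊥)
    {u v : L} (h : u * x ≤ v * x) : u ≤ v := by
  have h2 := hx.2 v ⊥
  rw [res_bot_left hL hx0, sup_bot_eq, sup_bot_eq] at h2
  rw [h2]; exact le_res h

lemma res_mul_of_le {x y : L} (hx : IsMeetPrincipal x) (h : y ≤ x) : res y x * x = y := by
  have := hx y ⊤
  rw [inf_top_eq, ← one_eq_top, one_mul, inf_eq_left.2 h] at this
  exact this.symm

lemma mul_ne_bot (hL : IsLatticeDomain L) {a b : L} (ha : a ≠ ⊥) (hb : b ≠ ⊥) :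
    a * b ≠ ⊥ := by
  intro h
  rcases hL.2 a b (le_of_eq h) with h' | h'
  · exact ha (le_bot_iff.1 h')
  · exact hb (le_bot_iff.1 h')

lemma bot_principal : IsPrincipal (⊥ : L) := by
  constructor
  · intro y z
    rw [mulBot, mulBot, inf_bot_eq]
  · intro y z
    rw [mulBot, res_bot_right, res_bot_right, sup_top_eq]

lemma mul_principal (hL : IsLatticeDomain L) {a b x : L} (h : a * b = x)
    (hx : IsPrincipal x) (hx0 : x ≠ ⊥) : IsPrincipal a := by
  have key : ∀ y : L, res y a = res (y * b) x := by
    intro y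
    apply le_antisymm
    · apply sSup_le; intro c hc
      apply le_sSup
      show c * x ≤ y * b
      rw [← h, ← mul_assoc]
      exact mmono' b hc
    · apply sSup_le; intro c hc
      apply le_sSup
      show c * a ≤ y
      apply cancel hL hx hx0
      calc c * a * x = c * x * a := mul_right_comm c a x
        _ ≤ y * b * a := mmono' a hc
        _ = y * x := by rw [mul_assoc, mul_comm b a, h]
  constructor
  · intro y z
    apply le_antisymm
    · apply cancel hL hx hx0
      have h1 : (y ⊓ z * a) * b ≤ y * b ⊓ z * x := by
        apply le_inf
        · exact mmono' b inf_le_left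
        · rw [← h, ← mul_assoc]; exact mmono' b inf_le_right
      rw [hx.1 (y * b) z, ← key y] at h1
      calc (y ⊓ z * a) * x = (y ⊓ z * a) * b * a := by rw [mul_assoc, mul_comm b a, h]
        _ ≤ (res y a ⊓ z) * x * a := mmono' a h1
        _ = (res y a ⊓ z) * a * x := mul_right_comm _ x a
    · apply le_inf
      · exact le_trans (mmono' a inf_le_left) (res_mul_le y a)
      · exact mmono' a inf_le_right
  · intro y z
    rw [key z, key (y * a ⊔ z)]
    have : (y * a ⊔ z) * b = y * x ⊔ z * b := by
      rw [mul_comm, mulSup, mul_comm b (y*a), mul_comm b z, mul_assoc, h]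
    rw [this]
    exact hx.2 y (z * b)

end Helpers

end MulLattice

theorem stmt17 {L : Type*} [PGCLattice L] (hL : IsLatticeDomain L)
    (hcic : ∀ x c : L, IsPrincipal x → x ≠ ⊥ → c ≠ ⊥ → res (x * c) c = x) :
    (∀ a : L, IsDivisorial a) ↔ (∀ a : L, IsPrincipal a) := by
  constructor
  · intro hdiv a
    by_cases ha : a = ⊥
    · rw [ha]; exact bot_principal
    -- the chosen principal witness for a
    have hd := hdiv a
    rw [IsDivisorial, vclos] at hd
    by_cases hex : ∃ x : L, IsPrincipal x ∧ x ≠ ⊥ ∧ x ≤ a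
    swap
    · rw [dif_neg hex] at hd; exact absurd hd.symm ha
    rw [dif_pos hex] at hd
    obtain ⟨hxp, hx0, hxa⟩ := hex.choose_spec
    set x := hex.choose with hxdef
    set b := res x a with hbdef
    -- hd : res x b = a
    have hb0 : b ≠ ⊥ := by
      intro h0
      have hat : a = ⊤ := by rw [← hd, h0, res_bot_right]
      have : b = x := by rw [hbdef, hat, res_top]
      exact hx0 (this ▸ h0)
    have hcx : a * b ≤ x := by rw [mul_comm]; exact res_mul_le x a
    have hc0 : a * b ≠ ⊥ := mul_ne_bot hL ha hb0
    -- the chosen principal witness for a * b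
    have hdc := hdiv (a * b)
    rw [IsDivisorial, vclos] at hdc
    by_cases hex2 : ∃ y : L, IsPrincipal y ∧ y ≠ ⊥ ∧ y ≤ a * b
    swap
    · rw [dif_neg hex2] at hdc; exact absurd hdc.symm hc0
    rw [dif_pos hex2] at hdc
    obtain ⟨hyp, hy0, hyc⟩ := hex2.choose_spec
    set y := hex2.choose with hydef
    set e := res y (a * b) with hedef
    -- hdc : res y e = a * b
    have hyx : y ≤ x := hyc.trans hcx
    set t := res y x with htdef
    have hty : t * x = y := res_mul_of_le hxp.1 hyx
    have ht0 : t ≠ ⊥ := by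
      intro h0
      rw [h0, mul_comm, mulBot] at hty
      exact hy0 hty.symm
    have htp : IsPrincipal t := mul_principal hL hty hyp hy0
    -- Step A : e * b ≤ t * b
    have heba : e * b * a ≤ t * x := by
      rw [mul_assoc, mul_comm b a, hty]
      exact mul_le_of_le_res (le_refl e)
    have hebt : e * b ≤ t := by
      apply cancel hL hxp hx0
      calc e * b * x ≤ e * b * a := mmono (e * b) hxa
        _ ≤ t * x := heba
    have hstepA : e * b ≤ t * b := by
      have hr : res (e * b) t * t = e * b := res_mul_of_le htp.1 hebt
      have hra : res (e * b) t * a ≤ x := by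
        apply cancel hL htp ht0
        calc res (e * b) t * a * t = res (e * b) t * t * a := mul_right_comm _ a t
          _ = e * b * a := by rw [hr]
          _ ≤ t * x := heba
          _ = x * t := mul_comm t x
      have hrb : res (e * b) t ≤ b := le_res hra
      calc e * b = res (e * b) t * t := hr.symm
        _ ≤ b * t := mmono' t hrb
        _ = t * b := mul_comm b t
    -- the element c₀ = ⨆ n, tⁿ * b and complete integral closedness
    set c₀ : L := ⨆ n : ℕ, t ^ n * b with hc₀def
    have hc₀0 : c₀ ≠ ⊥ := by
      intro h0
      apply hb0
      rw [eq_bot_iff, ← h0]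
      calc b = t ^ 0 * b := by rw [pow_zero, one_mul]
        _ ≤ c₀ := le_iSup (fun n : ℕ => t ^ n * b) 0
    have hec₀ : e * c₀ ≤ t * c₀ := by
      rw [hc₀def, mulISup, mulISup]
      apply iSup_le; intro n
      calc e * (t ^ n * b) = t ^ n * (e * b) := by
            rw [← mul_assoc, mul_comm e (t ^ n), mul_assoc]
        _ ≤ t ^ n * (t * b) := mmono (t ^ n) hstepA
        _ = t * (t ^ n * b) := by rw [← mul_assoc, mul_comm (t ^ n) t, mul_assoc]
        _ ≤ ⨆ n : ℕ, t * (t ^ n * b) := le_iSup (fun n : ℕ => t * (t ^ n * b)) n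
    have het : e ≤ t := by
      rw [← hcic t c₀ htp ht0 hc₀0]
      exact le_res hec₀
    -- conclude a * b = x
    have hxc : x ≤ a * b := by
      rw [← hdc]
      apply le_res
      calc x * e ≤ x * t := mmono x het
        _ = y := by rw [mul_comm]; exact hty
    have habx : a * b = x := le_antisymm hcx hxc
    exact mul_principal hL habx hxp hx0
  · intro hp a
    rw [IsDivisorial, vclos]
    by_cases ha : a = ⊥
    · have hex : ¬∃ x : L, IsPrincipal x ∧ x ≠ ⊥ ∧ x ≤ a := by
        rintro ⟨x, _, hx0, hxa⟩
        exact hx0 (le_bot_iff.1 (ha ▸ hxa))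
      rw [dif_neg hex, ha]
    · have hex : ∃ x : L, IsPrincipal x ∧ x ≠ ⊥ ∧ x ≤ a := ⟨a, hp a, ha, le_rfl⟩
      rw [dif_pos hex]
      obtain ⟨hxp, hx0, hxa⟩ := hex.choose_spec
      set x := hex.choose with hxdef
      set b := res x a with hbdef
      have hba : b * a = x := res_mul_of_le (hp a).1 hxa
      have hb0 : b ≠ ⊥ := by
        intro h0
        rw [h0, mul_comm, mulBot] at hba
        exact hx0 hba.symm
      have hxab : x = a * b := by rw [mul_comm]; exact hba.symm
      rw [hxab]
      exact hcic a b (hp a) ha hb0
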